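/- arXiv:1612.02916 — 2 statements merged into one kernel-verified Lean document; each statement's English description precedes it below -/
import Mathlib

section
/- Let Q be a binomial random variable with n trials and success probability p ∈ [0,1], and set μ = np. Then for every δ > 0, Pr(Q ≥ (1+δ)μ) ≤ exp(−δ·μ·ln(1+δ)/2). -/
open Finset

noncomputable def binomPrGe (n : ℕ) (p : ℝ) (t : ℝ) : ℝ :=
  ∑ k ∈ Finset.range (n + 1),
    if t ≤ (k : ℝ) then (n.choose k : ℝ) * p ^ k * (1 - p) ^ (n - k) else 0

lemma log_lb (x : ℝ) (hx : 0 < x) : x / (1 + x) ≤ Real.log (1 + x) := by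
  have h1x : (0:ℝ) < 1 + x := by linarith
  have h : Real.log (1/(1+x)) ≤ 1/(1+x) - 1 := Real.log_le_sub_one_of_pos (by positivity)
  rw [Real.log_div one_ne_zero (ne_of_gt h1x), Real.log_one] at h
  have h2 : 1 - 1/(1+x) ≤ Real.log (1+x) := by linarith
  have h3 : 1 - 1/(1+x) = x/(1+x) := by field_simp; ring
  linarith [h3 ▸ h2]

lemma chernoff_scalar (δ : ℝ) (hδ : 0 < δ) : δ ≤ (1 + δ/2) * Real.log (1 + δ) := by
  set f : ℝ → ℝ := fun x => (1 + x/2) * Real.log (1+x) - x with hfdef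
  have hderiv : ∀ x ∈ Set.Ioi (0:ℝ), HasDerivAt f ((1/2) * Real.log (1+x) + (1 + x/2) * (1+x)⁻¹ - 1) x := by
    intro x hx
    have hx0 : (0:ℝ) < 1 + x := by have := Set.mem_Ioi.mp hx; linarith
    have h1 : HasDerivAt (fun y : ℝ => 1 + y) 1 x := (hasDerivAt_id x).const_add 1
    have h2 : HasDerivAt (fun y : ℝ => Real.log (1+y)) ((1+x)⁻¹) x := by
      have := (Real.hasDerivAt_log (ne_of_gt hx0)).comp x h1
      rw [mul_one] at this
      exact this
    have h3 : HasDerivAt (fun y : ℝ => 1 + y/2) (1/2) x := ((hasDerivAt_id x).div_const 2).const_add 1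
    have h4 := (h3.mul h2).sub (hasDerivAt_id x)
    exact h4
  have hcont : ContinuousOn f (Set.Ici 0) := by
    apply ContinuousOn.sub
    · apply ContinuousOn.mul
      · fun_prop
      · apply ContinuousOn.log
        · fun_prop
        · intro x hx
          have : (0:ℝ) ≤ x := hx
          positivity
    · fun_prop
  have hmono : MonotoneOn f (Set.Ici 0) := by
    apply monotoneOn_of_deriv_nonneg (convex_Ici 0) hcont
    · intro x hx
      rw [interior_Ici] at hx
      exact (hderiv x hx).differentiableAt.differentiableWithinAt
    · intro x hx
      rw [interior_Ici] at hx
      rw [(hderiv x hx).deriv]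
      have hx0 : (0:ℝ) < x := Set.mem_Ioi.mp hx
      have h1x : (0:ℝ) < 1 + x := by linarith
      have hL := log_lb x hx0
      have hinv : (1+x) * (1+x)⁻¹ = 1 := mul_inv_cancel₀ (ne_of_gt h1x)
      have hdiv : x / (1+x) = x * (1+x)⁻¹ := div_eq_mul_inv x (1+x)
      rw [hdiv] at hL
      nlinarith [hL, hinv, inv_pos.mpr h1x]
  have h0 : f 0 = 0 := by simp [hfdef]
  have := hmono (Set.self_mem_Ici) (Set.mem_Ici.mpr (le_of_lt hδ)) (le_of_lt hδ)
  rw [h0] at this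
  simp only [hfdef] at this
  linarith

/-- Chernoff bound: for a binomial random variable `Q` with `n` trials and success
probability `p ∈ [0,1]`, setting `μ = n p`, for every `δ > 0`,
`Pr(Q ≥ (1+δ)μ) ≤ exp (-(δ μ ln (1+δ)) / 2)`. -/
theorem binomial_chernoff (n : ℕ) (p : ℝ) (hp0 : 0 ≤ p) (hp1 : p ≤ 1)
    (δ : ℝ) (hδ : 0 < δ) :
    binomPrGe n p ((1 + δ) * (n * p)) ≤
      Real.exp (-(δ * (n * p) * Real.log (1 + δ)) / 2) := by
  set s := Real.log (1+δ) with hsdef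
  have hs : 0 ≤ s := Real.log_nonneg (by linarith)
  have hes : Real.exp s = 1 + δ := Real.exp_log (by linarith)
  have hq : (0:ℝ) ≤ 1 - p := by linarith
  set t := (1+δ) * (n*p) with htdef
  have step1 : binomPrGe n p t ≤
      ∑ k ∈ Finset.range (n+1), (p * Real.exp s)^k * (1-p)^(n-k) * (n.choose k : ℝ) * Real.exp (-(s*t)) := by
    apply Finset.sum_le_sum
    intro k hk
    by_cases h : t ≤ (k:ℝ)
    · rw [if_pos h]
      have hone : (1:ℝ) ≤ Real.exp (s*k) * Real.exp (-(s*t)) := by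
        rw [← Real.exp_add]
        apply Real.one_le_exp
        nlinarith
      have heq : (n.choose k : ℝ) * p^k * (1-p)^(n-k) * (Real.exp (s*k) * Real.exp (-(s*t)))
          = (p * Real.exp s)^k * (1-p)^(n-k) * (n.choose k : ℝ) * Real.exp (-(s*t)) := by
        rw [mul_pow, ← Real.exp_nat_mul]
        ring_nf
      calc (n.choose k : ℝ) * p^k * (1-p)^(n-k)
          ≤ (n.choose k : ℝ) * p^k * (1-p)^(n-k) * (Real.exp (s*k) * Real.exp (-(s*t))) :=
            le_mul_of_one_le_right (by positivity) hone
        _ = _ := heq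
    · rw [if_neg h]
      positivity
  have step2 : ∑ k ∈ Finset.range (n+1), (p * Real.exp s)^k * (1-p)^(n-k) * (n.choose k : ℝ) * Real.exp (-(s*t))
      = (p * Real.exp s + (1-p))^n * Real.exp (-(s*t)) := by
    rw [← Finset.sum_mul, ← add_pow]
  have step3 : (p * Real.exp s + (1-p))^n ≤ Real.exp (n * (p * δ)) := by
    have hbase : p * Real.exp s + (1-p) = 1 + p * δ := by rw [hes]; ring
    rw [hbase]
    have hle : 1 + p*δ ≤ Real.exp (p*δ) := by
      have := Real.add_one_le_exp (p*δ); linarith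
    calc (1 + p*δ)^n ≤ (Real.exp (p*δ))^n := pow_le_pow_left₀ (by nlinarith) hle n
      _ = Real.exp (n * (p*δ)) := by rw [← Real.exp_nat_mul]
  have hnp : (0:ℝ) ≤ (n:ℝ) * p := by positivity
  have hexp : Real.exp (n * (p*δ)) * Real.exp (-(s*t)) ≤ Real.exp (-(δ * (n*p) * s) / 2) := by
    rw [← Real.exp_add]
    apply Real.exp_le_exp.mpr
    have hsc := chernoff_scalar δ hδ
    rw [← hsdef] at hsc
    have := mul_le_mul_of_nonneg_left hsc hnp
    rw [htdef]
    nlinarith [this]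
  calc binomPrGe n p t ≤ _ := step1
    _ = (p * Real.exp s + (1-p))^n * Real.exp (-(s*t)) := step2
    _ ≤ Real.exp (n * (p*δ)) * Real.exp (-(s*t)) :=
        mul_le_mul_of_nonneg_right step3 (Real.exp_nonneg _)
    _ ≤ _ := hexp
end

section
/- Let X_1, …, X_n be independent Bernoulli random variables where X_i equals 1 with probability p_i, and suppose p_i ≤ p for all i, where 0 < p < 1/3. Then Pr(X_1 + ⋯ + X_n ≥ n/3) ≤ exp(n·(1−3p)·ln(3p)/6). -/
open MeasureTheory ProbabilityTheory

lemma bernoulli_key_ineq {u : ℝ} (hu0 : 0 < u) (hu1 : u < 1) :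
    (1 + u) * Real.log u + 2 - 2 * u ≤ 0 := by
  set g : ℝ → ℝ := fun x => (1 + x) * Real.log x + 2 - 2 * x with hg
  have hderiv : ∀ x ∈ Set.Ioo (0:ℝ) 1, HasDerivAt g (Real.log x + 1 / x - 1) x := by
    intro x hx
    have hx0 : x ≠ 0 := ne_of_gt hx.1
    have h1 : HasDerivAt (fun y : ℝ => (1 + y) * Real.log y)
        ((0 + 1) * Real.log x + (1 + x) * x⁻¹) x :=
      ((hasDerivAt_const x (1:ℝ)).add (hasDerivAt_id x)).mul (Real.hasDerivAt_log hx0)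
    have h2 := (h1.add_const 2).sub ((hasDerivAt_id x).const_mul 2)
    have h3 : HasDerivAt g ((0 + 1) * Real.log x + (1 + x) * x⁻¹ - 2 * 1) x := h2
    convert h3 using 1
    linear_combination (-1:ℝ) * mul_inv_cancel₀ hx0
  have hmono : StrictMonoOn g (Set.Ioc (0:ℝ) 1) := by
    refine strictMonoOn_of_deriv_pos (convex_Ioc 0 1) ?_ ?_
    · have : ContinuousOn (fun x : ℝ => Real.log x) (Set.Ioc (0:ℝ) 1) :=
        Real.continuousOn_log.mono (by intro x hx; exact ne_of_gt hx.1)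
      exact ((continuousOn_const.add continuousOn_id).mul this).add
        continuousOn_const |>.sub (continuousOn_const.mul continuousOn_id)
    · intro x hx
      rw [interior_Ioc] at hx
      rw [(hderiv x hx).deriv]
      have hlog : Real.log x⁻¹ < x⁻¹ - 1 :=
        Real.log_lt_sub_one_of_pos (inv_pos.mpr hx.1)
          (by rw [Ne, inv_eq_one]; exact ne_of_lt hx.2)
      rw [Real.log_inv] at hlog
      have : 1 / x = x⁻¹ := one_div x
      linarith
  have h1 : g u < g 1 := hmono ⟨hu0, hu1.le⟩ ⟨one_pos, le_refl 1⟩ hu1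
  simp only [hg, Real.log_one] at h1
  linarith

/-- Let `X 0, …, X (n-1)` be mutually independent Bernoulli random variables, `X i`
equal to `1` with probability `p' i` (and `0` otherwise), with `p' i ≤ p` for all `i`,
where `0 < p < 1/3`. Then `Pr(X 0 + ⋯ + X (n-1) ≥ n/3) ≤ exp (n (1-3p) ln (3p) / 6)`. -/
theorem bernoulli_sum_tail
    {Ω : Type*} [MeasurableSpace Ω] (P : Measure Ω) [IsProbabilityMeasure P]
    (n : ℕ) (p : ℝ) (hp0 : 0 < p) (hp : p < 1 / 3)
    (p' : Fin n → ℝ) (hp'0 : ∀ i, 0 ≤ p' i) (hp'le : ∀ i, p' i ≤ p)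
    (X : Fin n → Ω → ℝ) (hmeas : ∀ i, Measurable (X i))
    (h01 : ∀ i ω, X i ω = 0 ∨ X i ω = 1)
    (hber : ∀ i, P {ω | X i ω = 1} = ENNReal.ofReal (p' i))
    (hind : iIndepFun X P) :
    (P {ω | (n : ℝ) / 3 ≤ ∑ i, X i ω}).toReal ≤
      Real.exp ((n : ℝ) * (1 - 3 * p) * Real.log (3 * p) / 6) := by
  have hu0 : (0:ℝ) < 3 * p := by linarith
  have hu1 : 3 * p < 1 := by linarith
  set t : ℝ := -Real.log (3 * p) with htdef
  have ht : 0 ≤ t := by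
    have := Real.log_nonpos hu0.le hu1.le
    simp [htdef]; linarith
  have het : Real.exp t = (3 * p)⁻¹ := by
    rw [htdef, Real.exp_neg, Real.exp_log hu0]
  -- integrability of exp (t * X i)
  have h_int : ∀ i, Integrable (fun ω => Real.exp (t * X i ω)) P := by
    intro i
    refine Integrable.mono' (integrable_const (Real.exp t)) ?_ ?_
    · exact (((hmeas i).const_mul t).exp).aestronglyMeasurable
    · refine Filter.Eventually.of_forall fun ω => ?_
      rw [Real.norm_eq_abs, abs_of_nonneg (Real.exp_pos _).le]
      apply Real.exp_le_exp.mpr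
      rcases h01 i ω with h | h <;> rw [h] <;> nlinarith
  -- mgf of each X i
  have hmgf : ∀ i, mgf (X i) P t = 1 + (Real.exp t - 1) * p' i := by
    intro i
    have hs : MeasurableSet {ω | X i ω = 1} := hmeas i (measurableSet_singleton 1)
    have hfun : (fun ω => Real.exp (t * X i ω)) =
        fun ω => 1 + (Real.exp t - 1) *
          Set.indicator {ω | X i ω = 1} (1 : Ω → ℝ) ω := by
      funext ω
      rcases h01 i ω with h | h
      · have : ω ∉ {ω | X i ω = 1} := by simp [Set.mem_setOf_eq, h]
        simp [h, Set.indicator_of_notMem this]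
      · have : ω ∈ {ω | X i ω = 1} := by simp [Set.mem_setOf_eq, h]
        simp [h, Set.indicator_of_mem this]
    have hind_int : Integrable (Set.indicator {ω | X i ω = 1} (1 : Ω → ℝ)) P :=
      (integrable_const (1:ℝ)).indicator hs
    rw [mgf, hfun, integral_add (integrable_const 1) (hind_int.const_mul _),
      integral_const, integral_const_mul, integral_indicator_one hs, measureReal_def P {ω | X i ω = 1}, hber i,
      ENNReal.toReal_ofReal (hp'0 i)]
    simp
  have hc0 : 0 ≤ Real.exp t - 1 := by
    have := Real.one_le_exp ht
    linarith
  have hmgf_le : ∀ i, mgf (X i) P t ≤ Real.exp ((Real.exp t - 1) * p) := by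
    intro i
    rw [hmgf i]
    have h1 : 1 + (Real.exp t - 1) * p' i ≤ 1 + (Real.exp t - 1) * p := by
      nlinarith [hp'le i]
    refine h1.trans ?_
    have := Real.add_one_le_exp ((Real.exp t - 1) * p)
    linarith
  -- Chernoff
  have hsum_int : Integrable (fun ω => Real.exp (t * (∑ i, X i) ω)) P :=
    hind.integrable_exp_mul_sum hmeas fun i _ => h_int i
  have hset : {ω | (n : ℝ) / 3 ≤ ∑ i, X i ω} = {ω | (n : ℝ) / 3 ≤ (∑ i, X i) ω} := by
    ext ω; simp [Finset.sum_apply]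
  have hcher := measure_ge_le_exp_mul_mgf (μ := P) (X := ∑ i, X i)
    ((n : ℝ) / 3) ht hsum_int
  have hprod : mgf (∑ i, X i) P t = ∏ i, mgf (X i) P t := hind.mgf_sum hmeas Finset.univ
  have hprod_le : mgf (∑ i, X i) P t ≤ Real.exp ((Real.exp t - 1) * p) ^ n := by
    rw [hprod]
    calc ∏ i, mgf (X i) P t ≤ ∏ _i : Fin n, Real.exp ((Real.exp t - 1) * p) :=
          Finset.prod_le_prod (fun i _ => mgf_nonneg) (fun i _ => hmgf_le i)
      _ = Real.exp ((Real.exp t - 1) * p) ^ n := by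
          simp [Finset.prod_const]
  have hstep : (P {ω | (n : ℝ) / 3 ≤ ∑ i, X i ω}).toReal ≤
      Real.exp (-t * ((n : ℝ) / 3) + (n : ℝ) * ((Real.exp t - 1) * p)) := by
    rw [hset]
    refine hcher.trans ?_
    rw [Real.exp_add, Real.exp_nat_mul]
    exact mul_le_mul_of_nonneg_left hprod_le (Real.exp_pos _).le
  refine hstep.trans (Real.exp_le_exp.mpr ?_)
  have hc : (Real.exp t - 1) * p = 1 / 3 - p := by
    rw [het]; field_simp
  have hL : t = -Real.log (3 * p) := htdef
  have key := bernoulli_key_ineq hu0 hu1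
  rw [hc, hL]
  have hn : (0:ℝ) ≤ (n : ℝ) := Nat.cast_nonneg n
  nlinarith [mul_nonneg hn (neg_nonneg.mpr key)]
end
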